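/- Let f(z) = z/(1−z) − conj(z/(1−z) − log(1−z)) (principal branch of the logarithm) on the unit disk 𝔻. Then the family F = {f∘φ : φ ∈ Aut(𝔻)} is a normal family on 𝔻 (spherically equicontinuous on compact subsets of 𝔻 with respect to the chordal metric), although f itself is not a normal harmonic mapping. Hence the normality of the family {f∘φ : φ ∈ Aut(𝔻)} does not imply that the harmonic mapping f is normal. -/

import Mathlib

open Complex Metric Set ENNReal Filter

noncomputable section

/-- The open unit disk in the complex plane. -/
def unitDisk : Set ℂ := Metric.ball (0 : ℂ) 1

notation "𝔻" => unitDisk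

/-- The chordal distance on ℂ. -/
def chordal (z w : ℂ) : ℝ :=
  ‖z - w‖ /
    (Real.sqrt (1 + ‖z‖ ^ 2) * Real.sqrt (1 + ‖w‖ ^ 2))

/-- The hyperbolic distance on the unit disk. -/
def hypDist (z w : ℂ) : ℝ :=
  (1 / 2) * Real.log
    ((1 + ‖(z - w) / (1 - (starRingEnd ℂ) z * w)‖) /
     (1 - ‖(z - w) / (1 - (starRingEnd ℂ) z * w)‖))

/-- The harmonic mapping `f = h + conj g`. -/
def harmMap (h g : ℂ → ℂ) : ℂ → ℂ := fun z => h z + (starRingEnd ℂ) (g z)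

/-- The quantity `(1 - |z|²) (|h'(z)| + |g'(z)|) / (1 + |f(z)|²)` for `f = h + conj g`. -/
def nQuot (h g : ℂ → ℂ) (z : ℂ) : ℝ :=
  (1 - ‖z‖ ^ 2) * (‖deriv h z‖ + ‖deriv g z‖) /
    (1 + ‖harmMap h g z‖ ^ 2)

/-- `‖f‖ₙ`, the normality norm of the harmonic mapping `f = h + conj g`,
as an element of `[0, ∞]`. -/
def harmNorm (h g : ℂ → ℂ) : ℝ≥0∞ :=
  ⨆ z ∈ 𝔻, ENNReal.ofReal (nQuot h g z)

/-- `φ` is a conformal automorphism of the unit disk. -/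
def IsDiskAut (φ : ℂ → ℂ) : Prop :=
  DifferentiableOn ℂ φ 𝔻 ∧ Set.MapsTo φ 𝔻 𝔻 ∧
    ∃ ψ : ℂ → ℂ, DifferentiableOn ℂ ψ 𝔻 ∧ Set.MapsTo ψ 𝔻 𝔻 ∧
      (∀ z ∈ 𝔻, ψ (φ z) = z) ∧ (∀ z ∈ 𝔻, φ (ψ z) = z)

def mob (a ζ : ℂ) : ℂ := (ζ - a) / (1 - (starRingEnd ℂ) a * ζ)

lemma mem_disk_iff {z : ℂ} : z ∈ 𝔻 ↔ ‖z‖ < 1 := by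
  simp [unitDisk, Metric.mem_ball, Complex.dist_eq]

lemma mob_den_ne {a ζ : ℂ} (ha : a ∈ 𝔻) (hζ : ζ ∈ 𝔻) :
    1 - (starRingEnd ℂ) a * ζ ≠ 0 := by
  rw [mem_disk_iff] at ha hζ
  intro h
  have h1 : (starRingEnd ℂ) a * ζ = 1 := by linear_combination -h
  have := congrArg (fun x : ℂ => ‖x‖) h1
  simp only [norm_mul, Complex.norm_conj, norm_one] at this
  nlinarith [norm_nonneg a, norm_nonneg ζ]

lemma normSq_key (a ζ : ℂ) :
    Complex.normSq (1 - (starRingEnd ℂ) a * ζ) - Complex.normSq (ζ - a)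
      = (1 - Complex.normSq a) * (1 - Complex.normSq ζ) := by
  simp only [Complex.normSq_apply, Complex.sub_re, Complex.sub_im, Complex.mul_re,
    Complex.mul_im, Complex.one_re, Complex.one_im, Complex.conj_re, Complex.conj_im]
  ring

lemma mob_mapsTo {a ζ : ℂ} (ha : a ∈ 𝔻) (hζ : ζ ∈ 𝔻) : mob a ζ ∈ 𝔻 := by
  have hd := mob_den_ne ha hζ
  have h1 : Complex.normSq (ζ - a) < Complex.normSq (1 - (starRingEnd ℂ) a * ζ) := by
    have hk := normSq_key a ζ
    rw [mem_disk_iff] at ha hζ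
    have ha' : Complex.normSq a < 1 := by
      rw [← Complex.sq_norm]; nlinarith [norm_nonneg a]
    have hζ' : Complex.normSq ζ < 1 := by
      rw [← Complex.sq_norm]; nlinarith [norm_nonneg ζ]
    nlinarith
  have h2 : ‖ζ - a‖ < ‖1 - (starRingEnd ℂ) a * ζ‖ := by
    rw [Complex.norm_def, Complex.norm_def]
    exact Real.sqrt_lt_sqrt (Complex.normSq_nonneg _) h1
  have hpos : 0 < ‖1 - (starRingEnd ℂ) a * ζ‖ :=
    (norm_pos_iff.mpr hd)
  rw [mem_disk_iff, mob, norm_div, div_lt_one hpos]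
  exact h2


lemma neg_mem_disk {a : ℂ} (ha : a ∈ 𝔻) : -a ∈ 𝔻 := by
  rw [mem_disk_iff] at *; simpa using ha

lemma mob_self (a : ℂ) : mob a a = 0 := by simp [mob]

lemma mob_inv {a ζ : ℂ} (ha : a ∈ 𝔻) (hζ : ζ ∈ 𝔻) : mob (-a) (mob a ζ) = ζ := by
  have hd := mob_den_ne ha hζ
  have hda : (1 : ℂ) - (starRingEnd ℂ) a * a ≠ 0 := mob_den_ne ha ha
  have hd2 : 1 - (starRingEnd ℂ) (-a) * ((ζ - a) / (1 - (starRingEnd ℂ) a * ζ))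
      = (1 - (starRingEnd ℂ) a * a) / (1 - (starRingEnd ℂ) a * ζ) := by
    have hc : (ζ - a) / (1 - (starRingEnd ℂ) a * ζ) * (1 - (starRingEnd ℂ) a * ζ) = ζ - a :=
      div_mul_cancel₀ _ hd
    rw [eq_div_iff hd, map_neg]; linear_combination (starRingEnd ℂ a) * hc
  simp only [mob]
  rw [hd2]
  rw [div_div_eq_mul_div, div_eq_iff hda]
  have hc : (ζ - a) / (1 - (starRingEnd ℂ) a * ζ) * (1 - (starRingEnd ℂ) a * ζ) = ζ - a :=
    div_mul_cancel₀ _ hd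
  linear_combination hc

lemma zero_mem_disk : (0 : ℂ) ∈ 𝔻 := by rw [mem_disk_iff]; simp

lemma mob_diffOn {a : ℂ} (ha : a ∈ 𝔻) : DifferentiableOn ℂ (mob a) 𝔻 := by
  apply DifferentiableOn.div
  · exact (differentiable_id.sub_const a).differentiableOn
  · exact ((differentiable_const _).sub ((differentiable_const _).mul differentiable_id)).differentiableOn
  · exact fun ζ hζ => mob_den_ne ha hζ

/-- Schwarz–Pick: pseudo-hyperbolic distance contraction. -/

lemma schwarz_pick {φ : ℂ → ℂ} (hd : DifferentiableOn ℂ φ 𝔻) (hm : Set.MapsTo φ 𝔻 𝔻)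
    {z w : ℂ} (hz : z ∈ 𝔻) (hw : w ∈ 𝔻) :
    ‖mob (φ z) (φ w)‖ ≤ ‖mob z w‖ := by
  have hnz := neg_mem_disk hz
  have hφz := hm hz
  set F : ℂ → ℂ := fun u => mob (φ z) (φ (mob (-z) u)) with hF
  have hmob1 : Set.MapsTo (mob (-z)) 𝔻 𝔻 := fun u hu => mob_mapsTo hnz hu
  have hmφ : Set.MapsTo (fun u => φ (mob (-z) u)) 𝔻 𝔻 := fun u hu => hm (hmob1 hu)
  have hFd : DifferentiableOn ℂ F (ball (0:ℂ) 1) := by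
    show DifferentiableOn ℂ F 𝔻
    exact ((mob_diffOn hφz).comp (hd.comp (mob_diffOn hnz) hmob1) hmφ)
  have hFm : Set.MapsTo F (ball (0:ℂ) 1) (ball (0:ℂ) 1) :=
    fun u hu => mob_mapsTo hφz (hmφ hu)
  have hF0 : F 0 = 0 := by
    have : mob (-z) 0 = z := by simp [mob]
    rw [hF]; simp only [this, mob_self]
  have key := Complex.norm_le_norm_of_mapsTo_ball hFd (hFm.mono_right ball_subset_closedBall) hF0
    (z := mob z w) (by rw [← mem_disk_iff]; exact mob_mapsTo hz hw)
  have heq : F (mob z w) = mob (φ z) (φ w) := by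
    show mob (φ z) (φ (mob (-z) (mob z w))) = _
    rw [mob_inv hz hw]
  rwa [heq] at key


lemma euclid_transfer {φ : ℂ → ℂ} (hd : DifferentiableOn ℂ φ 𝔻) (hm : Set.MapsTo φ 𝔻 𝔻)
    {z w : ℂ} {R : ℝ} (hR : R < 1) (hz : ‖z‖ ≤ R) (hw : ‖w‖ ≤ R)
    (hz1 : z ∈ 𝔻) (hw1 : w ∈ 𝔻) :
    ‖φ z - φ w‖ ≤ 2 / (1 - R ^ 2) * ‖z - w‖ := by
  have hR0 : 0 ≤ R := le_trans (norm_nonneg z) hz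
  have hRR : 0 < 1 - R ^ 2 := by nlinarith
  have hsp := schwarz_pick hd hm hz1 hw1
  have hφz := hm hz1; have hφw := hm hw1
  have hden1 : ‖1 - (starRingEnd ℂ) (φ z) * φ w‖ ≤ 2 := by
    calc ‖1 - (starRingEnd ℂ) (φ z) * φ w‖
        ≤ ‖(1:ℂ)‖ + ‖(starRingEnd ℂ) (φ z) * φ w‖ := by
          exact (norm_sub_le _ _)
      _ ≤ 2 := by
          rw [mem_disk_iff] at hφz hφw
          simp only [norm_one, norm_mul, Complex.norm_conj]
          nlinarith [norm_nonneg (φ z), norm_nonneg (φ w)]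
  have hden2 : 1 - R ^ 2 ≤ ‖1 - (starRingEnd ℂ) z * w‖ := by
    have h1 : ‖(starRingEnd ℂ) z * w‖ ≤ R ^ 2 := by
      simp only [norm_mul, Complex.norm_conj]
      nlinarith [norm_nonneg z]
    have h2 := abs_norm_sub_norm_le 1 ((starRingEnd ℂ) z * w)
    simp only [norm_one] at h2
    have h3 := le_abs_self (1 - ‖(starRingEnd ℂ) z * w‖)
    linarith
  have hdz := mob_den_ne hφz hφw
  have hdw := mob_den_ne hz1 hw1
  have key : ‖φ w - φ z‖ / ‖1 - (starRingEnd ℂ) (φ z) * φ w‖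
      ≤ ‖w - z‖ / ‖1 - (starRingEnd ℂ) z * w‖ := by
    have e1 : ‖mob (φ z) (φ w)‖ =
        ‖φ w - φ z‖ / ‖1 - (starRingEnd ℂ) (φ z) * φ w‖ := by
      rw [mob, norm_div]
    have e2 : ‖mob z w‖ =
        ‖w - z‖ / ‖1 - (starRingEnd ℂ) z * w‖ := by
      rw [mob, norm_div]
    rw [← e1, ← e2]; exact hsp
  have habs : ‖φ z - φ w‖ = ‖φ w - φ z‖ := by
    rw [← norm_neg]; ring_nf
  have habs2 : ‖z - w‖ = ‖w - z‖ := by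
    rw [← norm_neg]; ring_nf
  rw [habs, habs2]
  have hposφ : 0 < ‖1 - (starRingEnd ℂ) (φ z) * φ w‖ := norm_pos_iff.mpr hdz
  calc ‖φ w - φ z‖
      = ‖φ w - φ z‖ / ‖1 - (starRingEnd ℂ) (φ z) * φ w‖
        * ‖1 - (starRingEnd ℂ) (φ z) * φ w‖ := by rw [div_mul_cancel₀ _ hposφ.ne']
    _ ≤ (‖w - z‖ / ‖1 - (starRingEnd ℂ) z * w‖) * 2 := by
        apply mul_le_mul key hden1 hposφ.le (by positivity)
    _ = 2 * ‖w - z‖ / ‖1 - (starRingEnd ℂ) z * w‖ := by ring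
    _ ≤ 2 * ‖w - z‖ / (1 - R ^ 2) := by gcongr
    _ = 2 / (1 - R ^ 2) * ‖w - z‖ := by ring

lemma chordal_le_abs (p q : ℂ) : chordal p q ≤ ‖p - q‖ := by
  rw [chordal]
  have h1 : (1:ℝ) ≤ Real.sqrt (1 + ‖p‖ ^ 2) :=
    Real.le_sqrt_of_sq_le (by nlinarith [norm_nonneg p, sq_nonneg (‖p‖)])
  have h2 : (1:ℝ) ≤ Real.sqrt (1 + ‖q‖ ^ 2) :=
    Real.le_sqrt_of_sq_le (by nlinarith [sq_nonneg (‖q‖)])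
  calc ‖p - q‖ / (Real.sqrt (1 + ‖p‖ ^ 2) * Real.sqrt (1 + ‖q‖ ^ 2))
      ≤ ‖p - q‖ / 1 := by
        apply div_le_div_of_nonneg_left (norm_nonneg _) one_pos
        nlinarith
    _ = ‖p - q‖ := by simp

lemma chordal_le_two_div {p q : ℂ} {L : ℝ} (hL : 0 < L)
    (hp : L ≤ ‖p‖) (hq : L ≤ ‖q‖) : chordal p q ≤ 2 / L := by
  rw [chordal]
  have hp0 : 0 < ‖p‖ := lt_of_lt_of_le hL hp
  have hq0 : 0 < ‖q‖ := lt_of_lt_of_le hL hq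
  have h1 : ‖p‖ ≤ Real.sqrt (1 + ‖p‖ ^ 2) :=
    Real.le_sqrt_of_sq_le (by nlinarith)
  have h2 : ‖q‖ ≤ Real.sqrt (1 + ‖q‖ ^ 2) :=
    Real.le_sqrt_of_sq_le (by nlinarith)
  have hnum : ‖p - q‖ ≤ ‖p‖ + ‖q‖ :=
    norm_sub_le p q
  calc ‖p - q‖ / (Real.sqrt (1 + ‖p‖ ^ 2) * Real.sqrt (1 + ‖q‖ ^ 2))
      ≤ (‖p‖ + ‖q‖) / (‖p‖ * ‖q‖) := by
        apply div_le_div₀ (by positivity) hnum (by positivity)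
        exact mul_le_mul h1 h2 (norm_nonneg q) (by positivity)
    _ = 1 / ‖q‖ + 1 / ‖p‖ := by
        rw [div_add_div _ _ (ne_of_gt hq0) (ne_of_gt hp0), one_mul, mul_one, mul_comm]
    _ ≤ 1 / L + 1 / L := by
        gcongr
    _ = 2 / L := by ring

lemma one_sub_ne {z : ℂ} (hz : ‖z‖ < 1) : (1 : ℂ) - z ≠ 0 := by
  intro h
  have : z = 1 := by linear_combination -h
  rw [this] at hz; simp at hz

lemma one_sub_slit {z : ℂ} (hz : ‖z‖ < 1) : (1 : ℂ) - z ∈ Complex.slitPlane := by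
  left
  have : |z.re| < 1 := lt_of_le_of_lt (Complex.abs_re_le_norm z) hz
  simp only [Complex.sub_re, Complex.one_re]
  cases abs_lt.mp this; linarith

lemma hasDerivAt_h {z : ℂ} (hz : ‖z‖ < 1) :
    HasDerivAt (fun w : ℂ => w / (1 - w)) (1 / (1 - z) ^ 2) z := by
  have hne := one_sub_ne hz
  have h1 : HasDerivAt (fun w : ℂ => w) 1 z := hasDerivAt_id z
  have h2 : HasDerivAt (fun w : ℂ => 1 - w) (-1) z := by
    simpa using (hasDerivAt_id z).const_sub (1:ℂ)
  have := h1.div h2 hne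
  refine this.congr_deriv ?_
  congr 1; ring

lemma hasDerivAt_g {z : ℂ} (hz : ‖z‖ < 1) :
    HasDerivAt (fun w : ℂ => Complex.log (1 - w) - w / (1 - w))
      (-(1 - z)⁻¹ - 1 / (1 - z) ^ 2) z := by
  have hne := one_sub_ne hz
  have h2 : HasDerivAt (fun w : ℂ => 1 - w) (-1) z := by
    simpa using (hasDerivAt_id z).const_sub (1:ℂ)
  have hlog : HasDerivAt (fun w : ℂ => Complex.log (1 - w)) (-(1 - z)⁻¹) z := by
    have := (Complex.hasDerivAt_log (one_sub_slit hz)).comp z h2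
    refine this.congr_deriv ?_
    ring
  exact hlog.sub (hasDerivAt_h hz)

/-- `h z + g z = log (1-z)`, so the real part of `harmMap` is `log |1-z|`. -/

lemma re_harmMap {z : ℂ} :
    (harmMap (fun w => w / (1 - w)) (fun w => Complex.log (1 - w) - w / (1 - w)) z).re
      = Real.log (‖1 - z‖) := by
  simp only [harmMap, Complex.add_re, Complex.conj_re, Complex.sub_re]
  rw [show (z / (1 - z)).re + ((Complex.log (1 - z)).re - (z / (1 - z)).re)
    = (Complex.log (1 - z)).re by ring]
  exact Complex.log_re _

lemma abs_harmMap_ge {z : ℂ} (hz : z ∈ 𝔻) {r : ℝ} (hr : ‖1 - z‖ ≤ r) :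
    -Real.log r ≤ 
      ‖harmMap (fun w => w / (1 - w)) (fun w => Complex.log (1 - w) - w / (1 - w)) z‖ := by
  have h1 : ‖1 - z‖ > 0 := by
    apply norm_pos_iff.mpr; exact one_sub_ne (mem_disk_iff.mp hz)
  have h2 := Complex.abs_re_le_norm
      (harmMap (fun w => w / (1 - w)) (fun w => Complex.log (1 - w) - w / (1 - w)) z)
  rw [re_harmMap] at h2
  have h3 : Real.log (‖1 - z‖) ≤ Real.log r := Real.log_le_log h1 hr
  calc -Real.log r ≤ -Real.log (‖1 - z‖) := by linarith
    _ ≤ |Real.log (‖1 - z‖)| := neg_le_abs _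
    _ ≤ _ := h2

lemma harm_lip {a b : ℂ} (ha : a ∈ 𝔻) (hb : b ∈ 𝔻) {c : ℝ} (hc : 0 < c)
    (hseg : ∀ z ∈ segment ℝ a b, c ≤ ‖1 - z‖) :
    ‖harmMap (fun w => w / (1 - w)) (fun w => Complex.log (1 - w) - w / (1 - w)) a
      - harmMap (fun w => w / (1 - w)) (fun w => Complex.log (1 - w) - w / (1 - w)) b‖
      ≤ (2 / c ^ 2 + 1 / c) * ‖a - b‖ := by
  set s : Set ℂ := segment ℝ a b with hs
  have hsub : s ⊆ 𝔻 := (convex_ball (0:ℂ) 1).segment_subset ha hb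
  have hmem : ∀ z ∈ s, ‖z‖ < 1 := fun z hz => mem_disk_iff.mp (hsub hz)
  have hconv : Convex ℝ s := convex_segment a b
  have has : a ∈ s := left_mem_segment ℝ a b
  have hbs : b ∈ s := right_mem_segment ℝ a b
  -- bound for h
  have hH : ‖a / (1 - a) - b / (1 - b)‖ ≤ 1 / c ^ 2 * ‖a - b‖ := by
    have key := hconv.norm_image_sub_le_of_norm_hasDerivWithin_le (C := 1 / c ^ 2)
      (f := fun w : ℂ => w / (1 - w)) (f' := fun z => 1 / (1 - z) ^ 2)
      (fun z hz => (hasDerivAt_h (hmem z hz)).hasDerivWithinAt)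
      (fun z hz => by
        have h1 := hseg z hz
        rw [norm_div, norm_one, norm_pow]
        exact div_le_div_of_nonneg_left one_pos.le (by positivity)
          (pow_le_pow_left₀ hc.le h1 2)) has hbs
    simpa [norm_sub_rev] using key
  have hG : ‖(Complex.log (1 - a) - a / (1 - a)) - (Complex.log (1 - b) - b / (1 - b))‖
      ≤ (1 / c + 1 / c ^ 2) * ‖a - b‖ := by
    have key := hconv.norm_image_sub_le_of_norm_hasDerivWithin_le (C := 1 / c + 1 / c ^ 2)
      (f := fun w : ℂ => Complex.log (1 - w) - w / (1 - w))
      (f' := fun z => -(1 - z)⁻¹ - 1 / (1 - z) ^ 2)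
      (fun z hz => (hasDerivAt_g (hmem z hz)).hasDerivWithinAt)
      (fun z hz => by
        have h1 := hseg z hz
        calc ‖-(1 - z)⁻¹ - 1 / (1 - z) ^ 2‖
            ≤ ‖-(1 - z)⁻¹‖ + ‖1 / (1 - z) ^ 2‖ :=
              norm_sub_le _ _
          _ ≤ 1 / c + 1 / c ^ 2 := by
              apply add_le_add
              · rw [norm_neg, norm_inv, ← one_div]
                apply div_le_div_of_nonneg_left one_pos.le (by positivity) h1
              · rw [norm_div, norm_one, norm_pow]
                exact div_le_div_of_nonneg_left one_pos.le (by positivity)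
                  (pow_le_pow_left₀ hc.le h1 2)) has hbs
    simpa [norm_sub_rev] using key
  have hsplit : 
      ‖harmMap (fun w => w / (1 - w)) (fun w => Complex.log (1 - w) - w / (1 - w)) a
      - harmMap (fun w => w / (1 - w)) (fun w => Complex.log (1 - w) - w / (1 - w)) b‖
      ≤ ‖a / (1 - a) - b / (1 - b)‖
        + ‖(Complex.log (1 - a) - a / (1 - a)) - (Complex.log (1 - b) - b / (1 - b))‖ := by
    have hdiff : harmMap (fun w => w / (1 - w)) (fun w => Complex.log (1 - w) - w / (1 - w)) a
        - harmMap (fun w => w / (1 - w)) (fun w => Complex.log (1 - w) - w / (1 - w)) b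
        = (a / (1 - a) - b / (1 - b))
          + (starRingEnd ℂ) ((Complex.log (1 - a) - a / (1 - a)) - (Complex.log (1 - b) - b / (1 - b))) := by
      simp only [harmMap, map_sub]
      ring
    rw [hdiff]
    refine le_trans (norm_add_le _ _) ?_
    rw [Complex.norm_conj]
  calc ‖_‖ ≤ _ := hsplit
    _ ≤ 1 / c ^ 2 * ‖a - b‖ + (1 / c + 1 / c ^ 2) * ‖a - b‖ :=
        add_le_add hH hG
    _ = (2 / c ^ 2 + 1 / c) * ‖a - b‖ := by ring

lemma seg_dist {a b z : ℂ} (hz : z ∈ segment ℝ a b) :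
    ‖a - z‖ ≤ ‖a - b‖ := by
  obtain ⟨t1, t2, ht1, ht2, hsum, hz⟩ := hz
  have key : a - z = t2 • (a - b) := by
    have hts : (t1 : ℂ) = 1 - (t2 : ℂ) := by
      have : (t1 : ℝ) = 1 - t2 := by linarith
      exact_mod_cast this
    rw [← hz, Complex.real_smul, Complex.real_smul, Complex.real_smul, hts]
    ring
  rw [key, Complex.real_smul, norm_mul, Complex.norm_real, Real.norm_eq_abs, _root_.abs_of_nonneg ht2]
  nlinarith [norm_nonneg (a - b)]

lemma unif_cont {ε : ℝ} (hε : 0 < ε) :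
    ∃ η > (0:ℝ), ∀ a ∈ 𝔻, ∀ b ∈ 𝔻, ‖a - b‖ < η →
      chordal (harmMap (fun w => w / (1 - w)) (fun w => Complex.log (1 - w) - w / (1 - w)) a)
        (harmMap (fun w => w / (1 - w)) (fun w => Complex.log (1 - w) - w / (1 - w)) b) < ε := by
  set L : ℝ := 4 / ε + 1 with hL
  have hL0 : 0 < L := by positivity
  set r : ℝ := Real.exp (-L) / 2 with hr
  have hr0 : 0 < r := by positivity
  set c : ℝ := r / 2 with hc
  have hc0 : 0 < c := by positivity
  set C : ℝ := 2 / c ^ 2 + 1 / c with hC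
  have hC0 : 0 < C := by positivity
  refine ⟨min c (ε / (C + 1)), by positivity, ?_⟩
  intro a ha b hb hab
  by_cases hcase : r ≤ ‖1 - a‖
  · -- away from 1 : Lipschitz estimate
    have hseg : ∀ z ∈ segment ℝ a b, c ≤ ‖1 - z‖ := by
      intro z hz
      have h1 : ‖a - z‖ ≤ ‖a - b‖ := seg_dist hz
      have h2 : ‖1 - a‖ - ‖a - z‖ ≤ ‖1 - z‖ := by
        have ht := norm_add_le (1 - z) (z - a)
        have hza : ‖z - a‖ = ‖a - z‖ := by
          rw [← norm_neg]; ring_nf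
        rw [sub_add_sub_cancel] at ht
        linarith
      have h3 : ‖a - b‖ < c := lt_of_lt_of_le hab (min_le_left _ _)
      have : r - c ≤ ‖1 - z‖ := by linarith
      have hrc : r - c = c := by rw [hc]; ring
      linarith [hrc ▸ this]
    have hlip := harm_lip ha hb hc0 hseg
    have hch := chordal_le_abs
      (harmMap (fun w => w / (1 - w)) (fun w => Complex.log (1 - w) - w / (1 - w)) a)
      (harmMap (fun w => w / (1 - w)) (fun w => Complex.log (1 - w) - w / (1 - w)) b)
    have h4 : ‖a - b‖ < ε / (C + 1) := lt_of_lt_of_le hab (min_le_right _ _)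
    calc chordal _ _ ≤ _ := hch
      _ ≤ C * ‖a - b‖ := hlip
      _ < C * (ε / (C + 1)) := by
          apply mul_lt_mul_of_pos_left h4 hC0
      _ < ε := by
          rw [mul_div_assoc']
          rw [div_lt_iff₀ (by positivity)]
          nlinarith
  · -- near 1 : both values are large
    push_neg at hcase
    have hb1 : ‖1 - b‖ ≤ Real.exp (-L) := by
      have h2 : ‖1 - b‖ ≤ ‖1 - a‖ + ‖a - b‖ := by
        have := norm_add_le (1 - a) (a - b)
        simpa using this
      have h3 : ‖a - b‖ < c := lt_of_lt_of_le hab (min_le_left _ _)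
      have : ‖1 - b‖ < r + c := by linarith
      have : r + c ≤ Real.exp (-L) := by rw [hc, hr]; linarith [Real.exp_pos (-L)]
      linarith
    have ha1 : ‖1 - a‖ ≤ Real.exp (-L) := by
      have : r ≤ Real.exp (-L) := by rw [hr]; linarith [Real.exp_pos (-L)]
      linarith
    have hfa := abs_harmMap_ge ha ha1
    have hfb := abs_harmMap_ge hb hb1
    rw [Real.log_exp] at hfa hfb
    simp only [neg_neg] at hfa hfb
    have := chordal_le_two_div hL0 hfa hfb
    calc chordal _ _ ≤ 2 / L := this
      _ < ε := by
          rw [hL, div_lt_iff₀ (by positivity)]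
          have : 4 / ε * ε = 4 := by field_simp
          nlinarith

lemma nQuot_big (n : ℕ) :
    ∃ z ∈ 𝔻, (n : ℝ) ≤
      nQuot (fun w => w / (1 - w)) (fun w => Complex.log (1 - w) - w / (1 - w)) z := by
  obtain ⟨M, hMdef⟩ : ∃ M : ℝ, M = (n : ℝ) + 512 := ⟨_, rfl⟩
  have hM512 : (512:ℝ) ≤ M := by rw [hMdef]; linarith [Nat.cast_nonneg (α := ℝ) n]
  have hMn : (n : ℝ) ≤ M := by simp [hMdef]
  have hM0 : (0:ℝ) < M := by linarith
  obtain ⟨t, htdef⟩ : ∃ t : ℝ, t = Real.exp (-M) := ⟨_, rfl⟩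
  have ht0 : 0 < t := htdef ▸ Real.exp_pos _
  have ht1 : t < 1 := by
    rw [htdef]
    calc Real.exp (-M) < Real.exp 0 := Real.exp_lt_exp.mpr (by linarith)
      _ = 1 := Real.exp_zero
  obtain ⟨z, hzdef⟩ : ∃ z : ℂ, z = ((1 - t : ℝ) : ℂ) := ⟨_, rfl⟩
  have habsz : ‖z‖ = 1 - t := by
    rw [hzdef, Complex.norm_real, Real.norm_eq_abs, _root_.abs_of_nonneg (by linarith)]
  have hzD : z ∈ 𝔻 := by rw [mem_disk_iff, habsz]; linarith
  have h1z : (1 : ℂ) - z = (t : ℝ) := by rw [hzdef]; push_cast; ring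
  have habs1z : ‖1 - z‖ = t := by
    rw [h1z, Complex.norm_real, Real.norm_eq_abs, _root_.abs_of_nonneg ht0.le]
  refine ⟨z, hzD, ?_⟩
  -- derivative of h
  have hderiv : deriv (fun w : ℂ => w / (1 - w)) z = 1 / (1 - z) ^ 2 :=
    (hasDerivAt_h (by rw [habsz]; linarith)).deriv
  have habsderiv : ‖deriv (fun w : ℂ => w / (1 - w)) z‖ = 1 / t ^ 2 := by
    rw [hderiv, norm_div, norm_one, norm_pow, habs1z]
  -- value of harmMap
  have hval : harmMap (fun w => w / (1 - w)) (fun w => Complex.log (1 - w) - w / (1 - w)) z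
      = ((Real.log t : ℝ) : ℂ) := by
    have hlog : Complex.log (1 - z) = ((Real.log t : ℝ) : ℂ) := by
      rw [h1z, Complex.ofReal_log ht0.le]
    have hzt : z / (1 - z) = (((1 - t) / t : ℝ) : ℂ) := by
      rw [h1z, hzdef]; push_cast; ring
    simp only [harmMap, hlog, hzt, ← Complex.ofReal_sub, Complex.conj_ofReal]
    push_cast; ring
  have habsval : 
      ‖harmMap (fun w => w / (1 - w)) (fun w => Complex.log (1 - w) - w / (1 - w)) z‖ = M := by
    rw [hval, Complex.norm_real, Real.norm_eq_abs, htdef, Real.log_exp, abs_neg, _root_.abs_of_nonneg hM0.le]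
  -- the lower bound
  have hexp : M ^ 4 / 256 ≤ Real.exp M := by
    have h1 : M / 4 ≤ Real.exp (M / 4) := by
      have := Real.add_one_le_exp (M / 4); linarith
    have h2 : (M / 4) ^ 4 ≤ Real.exp (M / 4) ^ 4 :=
      pow_le_pow_left₀ (by linarith) h1 4
    have h3 : Real.exp (M / 4) ^ 4 = Real.exp M := by
      rw [← Real.exp_nat_mul]; norm_num; ring_nf
    calc M ^ 4 / 256 = (M / 4) ^ 4 := by ring
      _ ≤ Real.exp (M / 4) ^ 4 := h2
      _ = Real.exp M := h3
  have hkey : (n : ℝ) * (1 + M ^ 2) ≤ 1 / t := by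
    have h1t : 1 / t = Real.exp M := by
      rw [htdef, one_div, ← Real.exp_neg, neg_neg]
    rw [h1t]
    have step1 : (n:ℝ) * (1 + M ^ 2) ≤ M * (1 + M ^ 2) := by nlinarith
    have hM3 : (0:ℝ) ≤ M ^ 3 := by positivity
    have h512a : 512 * M ^ 3 ≤ M ^ 4 := by nlinarith
    have h512b : 512 * M ≤ M ^ 2 := by nlinarith
    have hMcube : M ≤ M ^ 3 := by nlinarith
    have step2 : M * (1 + M ^ 2) ≤ M ^ 4 / 256 := by nlinarith
    linarith [le_trans step2 hexp]
  -- assemble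
  rw [nQuot, habsderiv, habsval, habsz]
  have hnum : t ≤ 1 - (1 - t) ^ 2 := by nlinarith
  have hden : (0:ℝ) < 1 + M ^ 2 := by positivity
  rw [le_div_iff₀ hden]
  have hg0 : 0 ≤ ‖deriv (fun w : ℂ => Complex.log (1 - w) - w / (1 - w)) z‖ :=
    norm_nonneg _
  calc (n:ℝ) * (1 + M ^ 2) ≤ 1 / t := hkey
    _ = t * (1 / t ^ 2) := by field_simp
    _ ≤ (1 - (1 - t) ^ 2) * (1 / t ^ 2 + 
        ‖deriv (fun w : ℂ => Complex.log (1 - w) - w / (1 - w)) z‖) := by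
        apply mul_le_mul hnum (by linarith) (by positivity) (by nlinarith)

theorem normal_family_not_normal_mapping :
    let h : ℂ → ℂ := fun z => z / (1 - z)
    let g : ℂ → ℂ := fun z => Complex.log (1 - z) - z / (1 - z)
    (∀ K ⊆ 𝔻, IsCompact K → ∀ ε > (0 : ℝ), ∃ δ > (0 : ℝ),
      ∀ φ : ℂ → ℂ, IsDiskAut φ → ∀ z ∈ K, ∀ w ∈ K, ‖z - w‖ < δ →
        chordal (harmMap h g (φ z)) (harmMap h g (φ w)) < ε) ∧
    harmNorm h g = ⊤ := by
  intro h g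
  constructor
  · -- the family {f ∘ φ} is (spherically) equicontinuous
    intro K hK hKc ε hε
    obtain ⟨η, hη0, hunif⟩ := unif_cont hε
    rcases K.eq_empty_or_nonempty with hKe | hKne
    · exact ⟨1, one_pos, fun φ _ z hz => by rw [hKe] at hz; exact absurd hz (notMem_empty z)⟩
    obtain ⟨z₀, hz₀K, hmax⟩ := hKc.exists_isMaxOn hKne continuous_norm.continuousOn
    have hR1 : ‖z₀‖ < 1 := mem_disk_iff.mp (hK hz₀K)
    have hRR : 0 < 1 - ‖z₀‖ ^ 2 := by nlinarith [norm_nonneg z₀]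
    refine ⟨η * (1 - ‖z₀‖ ^ 2) / 2, by positivity, ?_⟩
    intro φ hφ z hz w hw hzw
    obtain ⟨hφd, hφm, -⟩ := hφ
    have h1 := euclid_transfer hφd hφm hR1 (hmax hz) (hmax hw) (hK hz) (hK hw)
    have h2 : ‖φ z - φ w‖ < η := by
      calc ‖φ z - φ w‖
          ≤ 2 / (1 - ‖z₀‖ ^ 2) * ‖z - w‖ := h1
        _ < 2 / (1 - ‖z₀‖ ^ 2) * (η * (1 - ‖z₀‖ ^ 2) / 2) := by
            apply mul_lt_mul_of_pos_left hzw (by positivity)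
        _ = η := by field_simp
    exact hunif _ (hφm (hK hz)) _ (hφm (hK hw)) h2
  · -- the mapping itself is not normal
    by_contra hne
    obtain ⟨n, hn⟩ := ENNReal.exists_nat_gt hne
    obtain ⟨z, hzD, hq⟩ := nQuot_big n
    have hle : (n : ℝ≥0∞) ≤ harmNorm h g := by
      calc (n : ℝ≥0∞) = ENNReal.ofReal (n : ℝ) := (ENNReal.ofReal_natCast n).symm
        _ ≤ ENNReal.ofReal (nQuot h g z) := ENNReal.ofReal_le_ofReal hq
        _ ≤ harmNorm h g :=
            le_iSup₂ (f := fun z (_ : z ∈ 𝔻) => ENNReal.ofReal (nQuot h g z)) z hzD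
    exact absurd (lt_of_le_of_lt hle hn) (lt_irrefl _)
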